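/- (Proposition 2(iii)) Let X₁, X₂, X₃ be pairwise distinct vectors in 𝔽₂ⁿ and let f : 𝔽₂ⁿ → 𝔽₂ satisfy: for every q ∈ 𝔽₂ⁿ, f(q) = q·Xᵢ for at least two indices i ∈ {1, 2, 3}. Then C_{X₁}(f)² + C_{X₂}(f)² + C_{X₃}(f)² ≥ (3/4)·N², where N = 2ⁿ; i.e., the Deutsch–Jozsa algorithm outputs one of X₁, X₂, X₃ with probability at least 3/4. -/
import Mathlib


/-- The inner product of two vectors in `𝔽₂ⁿ`. -/
def dotp {n : ℕ} (q X : Fin n → ZMod 2) : ZMod 2 := ∑ i, q i * X i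

/-- The Deutsch–Jozsa coefficient `C_j(f) = #{q : j·q = f q} − #{q : j·q ≠ f q}`. -/
def coefC {n : ℕ} (f : (Fin n → ZMod 2) → ZMod 2) (j : Fin n → ZMod 2) : ℤ :=
  ((Finset.univ.filter (fun q : Fin n → ZMod 2 => dotp j q = f q)).card : ℤ) -
  ((Finset.univ.filter (fun q : Fin n → ZMod 2 => dotp j q ≠ f q)).card : ℤ)

lemma dotp_comm {n : ℕ} (q X : Fin n → ZMod 2) : dotp q X = dotp X q := by
  simp [dotp, mul_comm]

lemma dotp_add_left {n : ℕ} (q q' X : Fin n → ZMod 2) :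
    dotp (q + q') X = dotp q X + dotp q' X := by
  simp [dotp, add_mul, Finset.sum_add_distrib]

lemma dotp_sub_left {n : ℕ} (q q' X : Fin n → ZMod 2) :
    dotp (q - q') X = dotp q X - dotp q' X := by
  simp [dotp, sub_mul, Finset.sum_sub_distrib]

lemma dotp_sub_right {n : ℕ} (q X Y : Fin n → ZMod 2) :
    dotp q (X - Y) = dotp q X - dotp q Y := by
  simp [dotp, mul_sub, Finset.sum_sub_distrib]

lemma zmod2_cases : ∀ x : ZMod 2, x = 0 ∨ x = 1 := by decide

lemma exists_dotp_one {n : ℕ} {u : Fin n → ZMod 2} (hu : u ≠ 0) : ∃ q, dotp q u = 1 := by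
  obtain ⟨i, hi⟩ := Function.ne_iff.mp hu
  have hui : u i = 1 := by
    rcases zmod2_cases (u i) with h | h
    · exact absurd h hi
    · exact h
  refine ⟨Pi.single i 1, ?_⟩
  simp [dotp, Pi.single_apply, ite_mul, hui]

lemma fiber_card {n : ℕ} (u v : Fin n → ZMod 2) (hu : u ≠ 0) (hv : v ≠ 0) (huv : u ≠ v)
    (a b : ZMod 2) :
    4 * (Finset.univ.filter
        (fun q : Fin n → ZMod 2 => dotp q u = a ∧ dotp q v = b)).card = 2 ^ n := by
  obtain ⟨qu, hqu⟩ := exists_dotp_one hu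
  obtain ⟨qv, hqv⟩ := exists_dotp_one hv
  have hw : u - v ≠ 0 := sub_ne_zero.mpr huv
  obtain ⟨qw, hqw⟩ := exists_dotp_one hw
  rw [dotp_sub_right] at hqw
  -- basis vectors for the image
  have he : (∃ e₁, dotp e₁ u = 1 ∧ dotp e₁ v = 0) ∧ (∃ e₂, dotp e₂ u = 0 ∧ dotp e₂ v = 1) := by
    rcases zmod2_cases (dotp qu v) with hα | hα
    · refine ⟨⟨qu, hqu, hα⟩, ?_⟩
      rcases zmod2_cases (dotp qv u) with hβ | hβ
      · exact ⟨qv, hβ, hqv⟩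
      · exact ⟨qu + qv, by rw [dotp_add_left, dotp_add_left, hqu, hα, hβ, hqv]; decide⟩
    · rcases zmod2_cases (dotp qw u) with hγ | hγ
      · have hγv : dotp qw v = 1 := by
          have := hqw; rw [hγ] at this
          rcases zmod2_cases (dotp qw v) with h | h
          · rw [h] at this; exact absurd this (by decide)
          · exact h
        exact ⟨⟨qu + qw, by rw [dotp_add_left, dotp_add_left, hqu, hα, hγ, hγv]; constructor <;> decide⟩,
               ⟨qw, hγ, hγv⟩⟩
      · have hγv : dotp qw v = 0 := by
          have := hqw; rw [hγ] at this
          rcases zmod2_cases (dotp qw v) with h | h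
          · exact h
          · rw [h] at this; exact absurd this (by decide)
        exact ⟨⟨qw, hγ, hγv⟩,
               ⟨qu + qw, by rw [dotp_add_left, dotp_add_left, hqu, hα, hγ, hγv]; constructor <;> decide⟩⟩
  obtain ⟨⟨e₁, he₁u, he₁v⟩, ⟨e₂, he₂u, he₂v⟩⟩ := he
  have hsurj : ∀ x : ZMod 2 × ZMod 2, ∃ e, dotp e u = x.1 ∧ dotp e v = x.2 := by
    intro x
    rcases zmod2_cases x.1 with h1 | h1 <;> rcases zmod2_cases x.2 with h2 | h2
    · exact ⟨0, by simp [dotp, h1, h2]⟩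
    · exact ⟨e₂, by rw [he₂u, he₂v, h1, h2]; exact ⟨rfl, rfl⟩⟩
    · exact ⟨e₁, by rw [he₁u, he₁v, h1, h2]; exact ⟨rfl, rfl⟩⟩
    · exact ⟨e₁ + e₂, by rw [dotp_add_left, dotp_add_left, he₁u, he₁v, he₂u, he₂v, h1, h2]
                         constructor <;> decide⟩
  -- all fibers have the same cardinality
  set c := (Finset.univ.filter
      (fun q : Fin n → ZMod 2 => dotp q u = a ∧ dotp q v = b)).card with hc
  have hfib : ∀ x : ZMod 2 × ZMod 2,
      (Finset.univ.filter
        (fun q : Fin n → ZMod 2 => dotp q u = x.1 ∧ dotp q v = x.2)).card = c := by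
    intro x
    obtain ⟨e, heu, hev⟩ := hsurj (x.1 - a, x.2 - b)
    rw [hc]
    apply Finset.card_bij' (fun q _ => q - e) (fun q _ => q + e)
    · intro q hq
      simp only [Finset.mem_filter, Finset.mem_univ, true_and] at hq ⊢
      rw [dotp_sub_left, dotp_sub_left, hq.1, hq.2, heu, hev]
      constructor <;> ring
    · intro q hq
      simp only [Finset.mem_filter, Finset.mem_univ, true_and] at hq ⊢
      rw [dotp_add_left, dotp_add_left, hq.1, hq.2, heu, hev]
      constructor <;> ring
    · intro q _; abel
    · intro q _; abel
  have hpart := Finset.card_eq_sum_card_fiberwise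
      (s := (Finset.univ : Finset (Fin n → ZMod 2)))
      (t := (Finset.univ : Finset (ZMod 2 × ZMod 2)))
      (f := fun q => (dotp q u, dotp q v)) (fun _ _ => Finset.mem_univ _)
  have hcards : ∀ x : ZMod 2 × ZMod 2,
      (Finset.univ.filter (fun q : Fin n → ZMod 2 => (dotp q u, dotp q v) = x)).card = c := by
    intro x
    rw [← hfib x]
    congr 1
    apply Finset.filter_congr
    intro q _
    simp [Prod.ext_iff]
  rw [Finset.sum_congr rfl (fun x _ => hcards x)] at hpart
  simp only [Finset.sum_const, Finset.card_univ, smul_eq_mul] at hpart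
  have hcard4 : Fintype.card (ZMod 2 × ZMod 2) = 4 := by decide
  have hcardN : Fintype.card (Fin n → ZMod 2) = 2 ^ n := by simp
  rw [hcardN, hcard4] at hpart
  omega

lemma key {n : ℕ} (f : (Fin n → ZMod 2) → ZMod 2) (A B C : Fin n → ZMod 2)
    (hAB : A ≠ B) (hAC : A ≠ C) (hBC : B ≠ C)
    (hf : ∀ q, (f q = dotp q A ∧ f q = dotp q B) ∨ (f q = dotp q A ∧ f q = dotp q C)
         ∨ (f q = dotp q B ∧ f q = dotp q C)) :
    2 * coefC f C = 2 ^ n := by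
  have hone : ∀ x : ZMod 2, x ≠ 0 → x = 1 := by decide
  have hset : Finset.univ.filter (fun q : Fin n → ZMod 2 => dotp C q ≠ f q)
      = Finset.univ.filter
          (fun q : Fin n → ZMod 2 => dotp q (A - B) = 0 ∧ dotp q (A - C) = 1) := by
    ext q
    simp only [Finset.mem_filter, Finset.mem_univ, true_and, dotp_sub_right, dotp_comm C q]
    constructor
    · intro h
      rcases hf q with ⟨h1, h2⟩ | ⟨h1, h2⟩ | ⟨h1, h2⟩
      · refine ⟨by rw [← h1, ← h2]; ring, ?_⟩
        apply hone
        rw [← h1]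
        intro hcon
        exact h (by rw [sub_eq_zero] at hcon; exact hcon.symm)
      · exact absurd h2.symm h
      · exact absurd h2.symm h
    · rintro ⟨h1, h2⟩
      rw [sub_eq_zero] at h1
      have h3 : dotp q A ≠ dotp q C := by
        intro hcon; rw [hcon, sub_self] at h2; exact absurd h2.symm (by decide)
      rcases hf q with ⟨ha, hb⟩ | ⟨ha, hb⟩ | ⟨ha, hb⟩
      · intro hcon; exact h3 (by rw [← ha]; exact hcon.symm)
      · exact absurd (ha.symm.trans hb) h3
      · exact absurd ((h1.trans ha.symm).trans hb) h3
  have hd : 4 * (Finset.univ.filter (fun q : Fin n → ZMod 2 => dotp C q ≠ f q)).card = 2 ^ n := by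
    rw [hset]
    exact fiber_card (A - B) (A - C) (sub_ne_zero.mpr hAB) (sub_ne_zero.mpr hAC)
      (fun h => hBC (sub_right_injective h)) 0 1
  have hsum : (Finset.univ.filter (fun q : Fin n → ZMod 2 => dotp C q = f q)).card
      + (Finset.univ.filter (fun q : Fin n → ZMod 2 => dotp C q ≠ f q)).card = 2 ^ n := by
    rw [Finset.card_filter_add_card_filter_not]
    simp [Finset.card_univ]
  have hgoal : coefC f C =
      ((Finset.univ.filter (fun q : Fin n → ZMod 2 => dotp C q = f q)).card : ℤ)
      - ((Finset.univ.filter (fun q : Fin n → ZMod 2 => dotp C q ≠ f q)).card : ℤ) := rfl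
  rw [hgoal]
  have hd' : (4 : ℤ) * ((Finset.univ.filter
      (fun q : Fin n → ZMod 2 => dotp C q ≠ f q)).card : ℤ) = 2 ^ n := by exact_mod_cast hd
  have hsum' : ((Finset.univ.filter (fun q : Fin n → ZMod 2 => dotp C q = f q)).card : ℤ)
      + ((Finset.univ.filter (fun q : Fin n → ZMod 2 => dotp C q ≠ f q)).card : ℤ)
      = 2 ^ n := by exact_mod_cast hsum
  linarith

/-- **Proposition 2(iii).** If `X₁, X₂, X₃` are pairwise distinct and `f(q)` agrees with
`q·Xᵢ` for at least two indices `i` for every `q`, then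
`C_{X₁}(f)² + C_{X₂}(f)² + C_{X₃}(f)² ≥ (3/4)·N²` with `N = 2ⁿ`; i.e. the algorithm
outputs one of `X₁, X₂, X₃` with probability at least `3/4`. -/
theorem prop2_iii {n : ℕ} (X₁ X₂ X₃ : Fin n → ZMod 2)
    (h12 : X₁ ≠ X₂) (h13 : X₁ ≠ X₃) (h23 : X₂ ≠ X₃)
    (f : (Fin n → ZMod 2) → ZMod 2)
    (hf : ∀ q, (f q = dotp q X₁ ∧ f q = dotp q X₂) ∨
               (f q = dotp q X₁ ∧ f q = dotp q X₃) ∨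
               (f q = dotp q X₂ ∧ f q = dotp q X₃)) :
    (coefC f X₁ : ℚ) ^ 2 + (coefC f X₂ : ℚ) ^ 2 + (coefC f X₃ : ℚ) ^ 2 ≥
      (3 / 4) * ((2 ^ n : ℚ)) ^ 2 := by
  have hC3 : 2 * coefC f X₃ = 2 ^ n := key f X₁ X₂ X₃ h12 h13 h23 hf
  have hC2 : 2 * coefC f X₂ = 2 ^ n := by
    apply key f X₁ X₃ X₂ h13 h12 (Ne.symm h23)
    intro q; have := hf q; tauto
  have hC1 : 2 * coefC f X₁ = 2 ^ n := by
    apply key f X₂ X₃ X₁ h23 (Ne.symm h12) (Ne.symm h13)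
    intro q; have := hf q; tauto
  have q1 : (2 : ℚ) * (coefC f X₁ : ℚ) = 2 ^ n := by exact_mod_cast hC1
  have q2 : (2 : ℚ) * (coefC f X₂ : ℚ) = 2 ^ n := by exact_mod_cast hC2
  have q3 : (2 : ℚ) * (coefC f X₃ : ℚ) = 2 ^ n := by exact_mod_cast hC3
  have e1 : (coefC f X₁ : ℚ) = (2 ^ n : ℚ) / 2 := by linarith
  have e2 : (coefC f X₂ : ℚ) = (2 ^ n : ℚ) / 2 := by linarith
  have e3 : (coefC f X₃ : ℚ) = (2 ^ n : ℚ) / 2 := by linarith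
  rw [e1, e2, e3]
  apply ge_of_eq
  ring
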